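/- The boundary of the amoeba is contained in its contour: if x belongs to the topological boundary ∂𝒜_p of the amoeba, then there exists z ∈ (ℂ*)^n with p(z) = 0, Log(z) = x, and z a critical point of Log restricted to the zero locus of p; equivalently, the logarithmic gradient vector (z_1 ∂p/∂z_1(z), …, z_n ∂p/∂z_n(z)) ∈ ℂ^n is a complex scalar multiple of a vector with all real coordinates. -/

import Mathlib

open MeasureTheory Real

noncomputable section

/-- Evaluation of the Laurent polynomial with support `A` and coefficients `c`
at the point `z`. -/
def lEval {n : ℕ} (A : Finset (Fin n → ℤ)) (c : (Fin n → ℤ) → ℂ)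
    (z : Fin n → ℂ) : ℂ :=
  ∑ α ∈ A, c α * ∏ i, z i ^ α i

/-- The coordinatewise logarithm of moduli. -/
def logMap {n : ℕ} (z : Fin n → ℂ) : Fin n → ℝ :=
  fun i => Real.log ‖z i‖

/-- The amoeba of the Laurent polynomial with support `A` and coefficients `c`. -/
def amoeba {n : ℕ} (A : Finset (Fin n → ℤ)) (c : (Fin n → ℤ) → ℂ) :
    Set (Fin n → ℝ) :=
  logMap '' {z | (∀ i, z i ≠ 0) ∧ lEval A c z = 0}

/-- The point of the complex torus with radial coordinates `e^u` and angles `θ`. -/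
def tPt {n : ℕ} (u θ : Fin n → ℝ) : Fin n → ℂ :=
  fun i => Complex.exp (u i + θ i * Complex.I)

/-- The cube `[0, 2π]^n`. -/
def cube (n : ℕ) : Set (Fin n → ℝ) := Set.univ.pi fun _ => Set.Icc 0 (2 * π)

/-- The order vector of a point `u` in the amoeba complement. -/
def order {n : ℕ} (A : Finset (Fin n → ℤ)) (c : (Fin n → ℤ) → ℂ)
    (u : Fin n → ℝ) : Fin n → ℂ := fun j =>
  (((2 * π) ^ n : ℝ) : ℂ)⁻¹ *
    ∫ θ in cube n,
      (∑ α ∈ A, c α * (α j : ℂ) * ∏ i, tPt u θ i ^ α i) / lEval A c (tPt u θ)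

/-- The Ronkin function. -/
def ronkin {n : ℕ} (A : Finset (Fin n → ℤ)) (c : (Fin n → ℤ) → ℂ)
    (x : Fin n → ℝ) : ℝ :=
  ((2 * π) ^ n)⁻¹ * ∫ θ in cube n, Real.log ‖lEval A c (tPt x θ)‖

/-- The Newton polytope of the support `A`. -/
def newton {n : ℕ} (A : Finset (Fin n → ℤ)) : Set (Fin n → ℝ) :=
  convexHull ℝ ((fun (α : Fin n → ℤ) (i : Fin n) => (α i : ℝ)) '' (A : Set (Fin n → ℤ)))

end

noncomputable section Stmt18AuxSection

set_option maxHeartbeats 1000000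

namespace Stmt18Aux

variable {n : ℕ} (A : Finset (Fin n → ℤ)) (c : (Fin n → ℤ) → ℂ)

/-- The entire function `F(w) = p(exp w)`. -/
def FF (w : Fin n → ℂ) : ℂ := ∑ α ∈ A, c α * Complex.exp (∑ i, (α i : ℂ) * w i)

/-- The logarithmic gradient in exponential coordinates. -/
def gg (j : Fin n) (w : Fin n → ℂ) : ℂ :=
  ∑ α ∈ A, c α * (α j : ℂ) * Complex.exp (∑ i, (α i : ℂ) * w i)

lemma prod_zpow_exp (α : Fin n → ℤ) (w : Fin n → ℂ) :
    ∏ i, Complex.exp (w i) ^ α i = Complex.exp (∑ i, (α i : ℂ) * w i) := by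
  rw [Complex.exp_sum]
  exact Finset.prod_congr rfl fun i _ => (Complex.exp_int_mul (w i) (α i)).symm

lemma lEval_exp (w : Fin n → ℂ) :
    lEval A c (fun i => Complex.exp (w i)) = FF A c w := by
  unfold lEval FF
  exact Finset.sum_congr rfl fun α _ => by rw [prod_zpow_exp]

lemma grad_exp (j : Fin n) (w : Fin n → ℂ) :
    (∑ α ∈ A, c α * (α j : ℂ) * ∏ i, Complex.exp (w i) ^ α i) = gg A c j w := by
  unfold gg
  exact Finset.sum_congr rfl fun α _ => by rw [prod_zpow_exp]

lemma continuous_FF : Continuous (FF A c) := by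
  unfold FF
  refine continuous_finset_sum _ fun α _ => (continuous_const.mul (Complex.continuous_exp.comp
    (continuous_finset_sum _ fun i _ => continuous_const.mul (continuous_apply i))))

/-- linear functional `w ↦ ∑ αᵢ wᵢ`. -/
def lin (α : Fin n → ℤ) : (Fin n → ℂ) →L[ℂ] ℂ :=
  ∑ i, (α i : ℂ) • ContinuousLinearMap.proj i

lemma lin_apply (α : Fin n → ℤ) (w : Fin n → ℂ) :
    lin α w = ∑ i, (α i : ℂ) * w i := by
  simp [lin, ContinuousLinearMap.sum_apply]

lemma lin_coe (α : Fin n → ℤ) :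
    ⇑(lin (n := n) α) = fun w => ∑ i, (α i : ℂ) * w i :=
  funext fun w => lin_apply α w

/-- total derivative of `FF` at `w`. -/
def LL (w : Fin n → ℂ) : (Fin n → ℂ) →L[ℂ] ℂ :=
  ∑ α ∈ A, (c α * Complex.exp (∑ i, (α i : ℂ) * w i)) • lin α

lemma LL_apply (w t : Fin n → ℂ) :
    LL A c w t = ∑ j, gg A c j w * t j := by
  simp only [LL, ContinuousLinearMap.sum_apply, ContinuousLinearMap.smul_apply, lin_apply,
    smul_eq_mul, gg, Finset.sum_mul, Finset.mul_sum]
  rw [Finset.sum_comm]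
  exact Finset.sum_congr rfl fun α _ => Finset.sum_congr rfl fun i _ => by ring

lemma hasStrictFDerivAt_FF (w : Fin n → ℂ) :
    HasStrictFDerivAt (FF A c) (LL A c w) w := by
  unfold FF LL
  refine HasStrictFDerivAt.fun_sum fun α _ => ?_
  have h1 : HasStrictFDerivAt (fun w : Fin n → ℂ => ∑ i, (α i : ℂ) * w i) (lin α) w := by
    rw [← lin_coe]; exact (lin α).hasStrictFDerivAt
  have h2 := (Complex.hasStrictDerivAt_exp (∑ i, (α i : ℂ) * w i)).comp_hasStrictFDerivAt w h1
  have h3 := h2.const_mul (c α)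
  rw [← smul_smul]
  exact h3

def Tlin : ((Fin n → ℝ) × (Fin n → ℝ)) →ₗ[ℝ] (Fin n → ℂ) where
  toFun p := fun j => (p.1 j : ℂ) + (p.2 j : ℂ) * Complex.I
  map_add' p q := by
    funext j
    simp only [Prod.fst_add, Prod.snd_add, Pi.add_apply, Complex.ofReal_add]
    ring
  map_smul' r p := by
    funext j
    simp only [Prod.smul_fst, Prod.smul_snd, Pi.smul_apply, smul_eq_mul, Complex.ofReal_mul,
      RingHom.id_apply, Complex.real_smul]
    ring

def TT : ((Fin n → ℝ) × (Fin n → ℝ)) →L[ℝ] (Fin n → ℂ) :=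
  LinearMap.toContinuousLinearMap Tlin

lemma TT_apply (p : (Fin n → ℝ) × (Fin n → ℝ)) (j : Fin n) :
    TT p j = (p.1 j : ℂ) + (p.2 j : ℂ) * Complex.I := rfl

/-- exp∘(TT p) is in the zero locus when `FF (TT p) = 0`, and its logMap is `p.1`. -/
lemma mem_amoeba_of_FF_zero (p : (Fin n → ℝ) × (Fin n → ℝ)) (h : FF A c (TT p) = 0) :
    p.1 ∈ amoeba A c := by
  refine ⟨fun i => Complex.exp (TT p i), ⟨fun i => Complex.exp_ne_zero _, by
    rw [lEval_exp]; exact h⟩, ?_⟩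
  funext i
  simp only [logMap, Complex.norm_exp]
  rw [Real.log_exp]
  have : (TT p i).re = p.1 i := by
    simp [TT_apply, Complex.add_re, Complex.ofReal_re, Complex.mul_re, Complex.I_re,
      Complex.I_im, Complex.ofReal_im]
  rw [this]

/-- Main openness lemma: a non-critical zero over `x` forces `x` interior. -/
lemma amoeba_mem_nhds (w : Fin n → ℂ) (hw : FF A c w = 0)
    (j k : Fin n)
    (hD : (gg A c j w).re * (gg A c k w).im - (gg A c j w).im * (gg A c k w).re ≠ 0) :
    amoeba A c ∈ nhds (fun i => (w i).re) := by
  classical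
  set g : Fin n → ℂ := fun m => gg A c m w with hg
  set G : ((Fin n → ℝ) × (Fin n → ℝ)) → (Fin n → ℝ) × ℂ :=
    fun p => (p.1, FF A c (TT p)) with hG
  set G' : ((Fin n → ℝ) × (Fin n → ℝ)) →L[ℝ] (Fin n → ℝ) × ℂ :=
    (ContinuousLinearMap.fst ℝ _ _).prod (((LL A c w).restrictScalars ℝ).comp TT) with hG'
  set p₀ : (Fin n → ℝ) × (Fin n → ℝ) := (fun i => (w i).re, fun i => (w i).im) with hp₀
  have hTp₀ : TT p₀ = w := by
    funext i; rw [TT_apply]; exact Complex.re_add_im _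
  have hGderiv : HasStrictFDerivAt G G' p₀ := by
    refine HasStrictFDerivAt.prodMk hasStrictFDerivAt_fst ?_
    have h1 := (hasStrictFDerivAt_FF A c (TT p₀)).restrictScalars ℝ
    have h2 := h1.comp p₀ (TT.hasStrictFDerivAt (x := p₀))
    rw [hTp₀] at h2
    exact h2
  -- surjectivity of G'
  have hsurj : G'.range = ⊤ := by
    rw [LinearMap.range_eq_top]
    rintro ⟨a, s⟩
    set D : ℝ := (g j).re * (g k).im - (g j).im * (g k).re with hDdef
    set s'' : ℂ := (s - ∑ m, g m * (a m : ℂ)) * (-Complex.I) with hs''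
    set t₁ : ℝ := (s''.re * (g k).im - s''.im * (g k).re) / D with ht₁
    set t₂ : ℝ := (s''.im * (g j).re - s''.re * (g j).im) / D with ht₂
    have hjk : j ≠ k := by
      rintro rfl; apply hD; ring
    have key : (t₁ : ℂ) * g j + (t₂ : ℂ) * g k = s'' := by
      apply Complex.ext
      · simp only [Complex.add_re, Complex.mul_re, Complex.ofReal_re, Complex.ofReal_im,
          zero_mul, sub_zero]
        rw [ht₁, ht₂]
        field_simp
        ring
      · simp only [Complex.add_im, Complex.mul_im, Complex.ofReal_re, Complex.ofReal_im,
          zero_mul, add_zero]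
        rw [ht₁, ht₂]
        field_simp
        ring
    refine ⟨(a, fun m => if m = j then t₁ else if m = k then t₂ else 0), ?_⟩
    have hLval : (LL A c w) (TT (a, fun m => if m = j then t₁ else if m = k then t₂ else 0)) = s := by
      rw [LL_apply]
      have : ∀ m : Fin n, gg A c m w * TT (a, fun m => if m = j then t₁ else if m = k then t₂ else 0) m
          = g m * (a m : ℂ) + g m * ((if m = j then (t₁:ℂ) else if m = k then (t₂:ℂ) else 0) * Complex.I) := by
        intro m
        rw [TT_apply]
        simp only [hg]
        rw [mul_add]
        congr 2
        split_ifs <;> simp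
      rw [Finset.sum_congr rfl fun m _ => this m, Finset.sum_add_distrib]
      have h2 : ∑ m, g m * ((if m = j then (t₁:ℂ) else if m = k then (t₂:ℂ) else 0) * Complex.I)
          = ((t₁:ℂ) * g j + (t₂:ℂ) * g k) * Complex.I := by
        rw [Finset.sum_congr rfl (fun m _ => by
          rw [show g m * ((if m = j then (t₁:ℂ) else if m = k then (t₂:ℂ) else 0) * Complex.I)
            = (if m = j then (t₁:ℂ) * g j * Complex.I else if m = k then (t₂:ℂ) * g k * Complex.I else 0) from by
            split_ifs with h1 h2
            · subst h1; ring
            · subst h2; ring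
            · ring])]
        have hsplit : ∀ m : Fin n,
            (if m = j then (t₁:ℂ) * g j * Complex.I else if m = k then (t₂:ℂ) * g k * Complex.I else 0)
            = (if m = j then (t₁:ℂ) * g j * Complex.I else 0)
              + (if m = k then (t₂:ℂ) * g k * Complex.I else 0) := by
          intro m
          split_ifs with h1 h2 <;> simp_all
        rw [Finset.sum_congr rfl fun m _ => hsplit m, Finset.sum_add_distrib,
          Finset.sum_ite_eq' Finset.univ j, Finset.sum_ite_eq' Finset.univ k]
        simp only [Finset.mem_univ, if_true]
        ring
      rw [h2, key, hs'']
      have : (-Complex.I) * Complex.I = 1 := by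
        simp [Complex.I_mul_I]
      calc ∑ m, g m * (a m : ℂ) + (s - ∑ m, g m * (a m:ℂ)) * (-Complex.I) * Complex.I
          = ∑ m, g m * (a m : ℂ) + (s - ∑ m, g m * (a m:ℂ)) * ((-Complex.I) * Complex.I) := by ring
        _ = s := by rw [this]; ring
    show G' _ = _
    rw [hG']
    ext
    · rfl
    · exact hLval
  -- open mapping
  have hmap := hGderiv.map_nhds_eq_of_surj hsurj
  have hGp₀ : G p₀ = (fun i => (w i).re, 0) := by
    rw [hG]; simp only [hTp₀, hw]; rfl
  set W : Set ((Fin n → ℝ) × ℂ) := {q | q.2 = 0 → q.1 ∈ amoeba A c} with hW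
  have hWnhds : W ∈ nhds ((fun i => (w i).re, (0:ℂ)) : (Fin n → ℝ) × ℂ) := by
    rw [← hGp₀, ← hmap, Filter.mem_map]
    filter_upwards with p hp
    exact mem_amoeba_of_FF_zero A c p hp
  have hcont : Continuous (fun u : Fin n → ℝ => ((u, (0:ℂ)) : (Fin n → ℝ) × ℂ)) :=
    continuous_id.prodMk continuous_const
  have hpre := hcont.continuousAt (x := fun i => (w i).re) |>.preimage_mem_nhds hWnhds
  have heq : (fun u : Fin n → ℝ => ((u, (0:ℂ)) : (Fin n → ℝ) × ℂ)) ⁻¹' W ⊆ amoeba A c := by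
    intro u hu
    exact hu rfl
  exact Filter.mem_of_superset hpre heq

lemma exists_w_of_mem_closure (x : Fin n → ℝ) (hx : x ∈ closure (amoeba A c)) :
    ∃ w : Fin n → ℂ, FF A c w = 0 ∧ (fun i => (w i).re) = x := by
  classical
  obtain ⟨u, hu, hulim⟩ := mem_closure_iff_seq_limit.1 hx
  have hch : ∀ m : ℕ, ∃ w : Fin n → ℂ, FF A c w = 0 ∧ (fun i => (w i).re) = u m ∧
      ∀ i, |(w i).im| ≤ π := by
    intro m
    obtain ⟨z, ⟨hz0, hzval⟩, hzlog⟩ := hu m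
    refine ⟨fun i => Complex.log (z i), ?_, ?_, ?_⟩
    · rw [← lEval_exp]
      have : (fun i => Complex.exp (Complex.log (z i))) = z := by
        funext i; exact Complex.exp_log (hz0 i)
      rw [this]; exact hzval
    · funext i
      rw [Complex.log_re]
      exact congrFun hzlog i
    · intro i
      rw [Complex.log_im, abs_le]
      exact ⟨le_of_lt (Complex.neg_pi_lt_arg _), Complex.arg_le_pi _⟩
  choose W hW1 hW2 hW3 using hch
  obtain ⟨N, hN⟩ := (Metric.tendsto_atTop.1 hulim) 1 one_pos
  set R : ℝ := ‖x‖ + 1 + π with hR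
  have hRnn : 0 ≤ R := by positivity
  have hbd : ∀ m : ℕ, W (m + N) ∈ Metric.closedBall (0 : Fin n → ℂ) R := by
    intro m
    rw [Metric.mem_closedBall, dist_zero_right]
    rw [pi_norm_le_iff_of_nonneg hRnn]
    intro i
    have h1 : ‖W (m + N) i‖ ≤ |(W (m + N) i).re| + |(W (m + N) i).im| :=
      Complex.norm_le_abs_re_add_abs_im _
    have h2 : |(W (m + N) i).re| ≤ ‖x‖ + 1 := by
      have := congrFun (hW2 (m + N)) i
      rw [this]
      have hd := hN (m + N) (Nat.le_add_left N m)
      rw [dist_eq_norm] at hd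
      have h3 : |u (m + N) i - x i| ≤ ‖u (m + N) - x‖ := by
        simpa using norm_le_pi_norm (u (m + N) - x) i
      have h4 : |x i| ≤ ‖x‖ := by simpa using norm_le_pi_norm x i
      calc |u (m + N) i| ≤ |u (m + N) i - x i| + |x i| := by
            simpa using abs_add_le (u (m + N) i - x i) (x i)
        _ ≤ ‖u (m + N) - x‖ + ‖x‖ := add_le_add h3 h4
        _ ≤ 1 + ‖x‖ := by linarith [le_of_lt hd]
        _ = ‖x‖ + 1 := by ring
    calc ‖W (m + N) i‖ = ‖W (m + N) i‖ := rfl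
      _ ≤ |(W (m + N) i).re| + |(W (m + N) i).im| := h1
      _ ≤ (‖x‖ + 1) + π := add_le_add h2 (hW3 (m + N) i)
      _ = R := by rw [hR]
  obtain ⟨w, hwcl, φ, hφ, hwlim⟩ :=
    tendsto_subseq_of_bounded (Metric.isBounded_closedBall (x := (0 : Fin n → ℂ)) (r := R)) hbd
  refine ⟨w, ?_, ?_⟩
  · have h1 : Filter.Tendsto (fun m => FF A c (W (φ m + N))) Filter.atTop (nhds (FF A c w)) :=
      ((continuous_FF A c).continuousAt.tendsto).comp hwlim
    have h2 : (fun m => FF A c (W (φ m + N))) = fun _ => (0:ℂ) := by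
      funext m; exact hW1 _
    rw [h2] at h1
    exact (tendsto_const_nhds_iff.1 h1).symm
  · have hre : Continuous (fun w : Fin n → ℂ => fun i => (w i).re) :=
      continuous_pi fun i => Complex.continuous_re.comp (continuous_apply i)
    have h1 : Filter.Tendsto (fun m => (fun i => (W (φ m + N) i).re)) Filter.atTop
        (nhds (fun i => (w i).re)) := (hre.continuousAt.tendsto).comp hwlim
    have h2 : Filter.Tendsto (fun m => u (φ m + N)) Filter.atTop (nhds x) :=
      hulim.comp ((Filter.tendsto_add_atTop_nat N).comp hφ.tendsto_atTop)
    have h3 : (fun m => (fun i => (W (φ m + N) i).re)) = fun m => u (φ m + N) := by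
      funext m; exact hW2 _
    rw [h3] at h1
    exact tendsto_nhds_unique h1 h2

/-- Dichotomy: a vector in `ℂ^n` is a complex multiple of a real vector,
or some 2×2 real minor is invertible. -/
lemma crit_or_noncrit (g : Fin n → ℂ) :
    (∃ (lam : ℂ) (v : Fin n → ℝ), ∀ j, g j = lam * (v j : ℂ)) ∨
    ∃ j k, (g j).re * (g k).im - (g j).im * (g k).re ≠ 0 := by
  classical
  by_cases h : ∀ j k, (g j).re * (g k).im - (g j).im * (g k).re = 0
  · left
    by_cases hz : ∀ j, g j = 0
    · exact ⟨0, 0, fun j => by simp [hz j]⟩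
    · push_neg at hz
      obtain ⟨j, hj⟩ := hz
      have hd : (g j).re ^ 2 + (g j).im ^ 2 ≠ 0 := by
        intro h0
        apply hj
        have h1 : (g j).re = 0 ∧ (g j).im = 0 := by
          constructor <;> nlinarith [sq_nonneg (g j).re, sq_nonneg (g j).im]
        exact Complex.ext h1.1 h1.2
      refine ⟨g j, fun k => ((g k).re * (g j).re + (g k).im * (g j).im) /
        ((g j).re ^ 2 + (g j).im ^ 2), fun k => ?_⟩
      apply Complex.ext
      · simp only [Complex.mul_re, Complex.ofReal_re, Complex.ofReal_im, mul_zero, sub_zero]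
        field_simp
        linear_combination (-(g j).im) * h j k
      · simp only [Complex.mul_im, Complex.ofReal_re, Complex.ofReal_im, mul_zero, add_zero]
        field_simp
        linear_combination (g j).re * h j k
  · right
    push_neg at h
    exact h

end Stmt18Aux

end Stmt18AuxSection

/-- The boundary of the amoeba is contained in its contour: every point of the
topological boundary of `𝒜_p` is the image under `Log` of a zero `z` of `p`
which is a critical point of `Log` restricted to the zero locus, i.e. the
logarithmic gradient `(z₁ ∂p/∂z₁(z), …, z_n ∂p/∂z_n(z))` is a complex scalar
multiple of a vector with all real coordinates. -/
theorem stmt_18 {n : ℕ} (A : Finset (Fin n → ℤ)) (c : (Fin n → ℤ) → ℂ)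
    (hA : A.Nonempty) (hc : ∀ α ∈ A, c α ≠ 0)
    (x : Fin n → ℝ) (hx : x ∈ frontier (amoeba A c)) :
    ∃ z : Fin n → ℂ, (∀ i, z i ≠ 0) ∧ lEval A c z = 0 ∧ logMap z = x ∧
      ∃ (lam : ℂ) (v : Fin n → ℝ), ∀ j,
        (∑ α ∈ A, c α * (α j : ℂ) * ∏ i, z i ^ α i) = lam * (v j : ℂ) := by
  open Stmt18Aux in
  have hxc : x ∈ closure (amoeba A c) := hx.1
  have hxni : x ∉ interior (amoeba A c) := by
    rw [frontier] at hx
    exact hx.2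
  obtain ⟨w, hw0, hwre⟩ := Stmt18Aux.exists_w_of_mem_closure A c x hxc
  set z : Fin n → ℂ := fun i => Complex.exp (w i) with hz
  have hz0 : ∀ i, z i ≠ 0 := fun i => Complex.exp_ne_zero _
  have hzval : lEval A c z = 0 := by
    rw [hz]
    rw [Stmt18Aux.lEval_exp A c w]
    exact hw0
  have hzlog : logMap z = x := by
    funext i
    simp only [logMap, hz, Complex.norm_exp, Real.log_exp]
    exact congrFun hwre i
  rcases Stmt18Aux.crit_or_noncrit (fun j => Stmt18Aux.gg A c j w) with hcrit | hnon
  · obtain ⟨lam, v, hlv⟩ := hcrit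
    refine ⟨z, hz0, hzval, hzlog, lam, v, fun j => ?_⟩
    rw [hz]
    rw [Stmt18Aux.grad_exp A c j w]
    exact hlv j
  · exfalso
    obtain ⟨j, k, hD⟩ := hnon
    apply hxni
    rw [mem_interior_iff_mem_nhds]
    have := Stmt18Aux.amoeba_mem_nhds A c w hw0 j k hD
    rwa [hwre] at this
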